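/- Let I be a finite nonempty index set and let q, t : I → ℝ satisfy q i ≥ 0 and t i ≥ 0 for all i ∈ I. Define F on the set {p : I → ℝ | ∀ i, p i ≥ 0} by F(p) = Σ_{i∈I} (t i + p i)·log(t i + p i) − Σ_{i∈I} (t i + p i + q i)·log(t i + p i + q i), with the convention 0·log 0 = 0. Then F is a convex function of p on this set: for all p, p' with nonnegative entries and all λ ∈ [0,1], F(λ·p + (1−λ)·p') ≤ λ·F(p) + (1−λ)·F(p'). -/

import Mathlib

open Real Finset

lemma aux_hasDerivAt (c : ℝ) (hc : 0 ≤ c) {y : ℝ} (hy : 0 < y) :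
    HasDerivAt (fun y : ℝ => y * Real.log y - (y + c) * Real.log (y + c))
      (Real.log y - Real.log (y + c)) y := by
  have h1 : HasDerivAt (fun y : ℝ => y * Real.log y) (Real.log y + 1) y :=
    Real.hasDerivAt_mul_log hy.ne'
  have hyc : (0:ℝ) < y + c := by linarith
  have h2 : HasDerivAt (fun y : ℝ => (y + c) * Real.log (y + c))
      ((Real.log (y + c) + 1) * 1) y := by
    exact (Real.hasDerivAt_mul_log hyc.ne').comp y ((hasDerivAt_id y).add_const c)
  have := h1.sub h2
  exact this.congr_deriv (by ring)

lemma aux_convexOn (c : ℝ) (hc : 0 ≤ c) :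
    ConvexOn ℝ (Set.Ici (0:ℝ))
      (fun y : ℝ => y * Real.log y - (y + c) * Real.log (y + c)) := by
  have hderiv : ∀ y ∈ Set.Ioi (0:ℝ),
      deriv (fun y : ℝ => y * Real.log y - (y + c) * Real.log (y + c)) y
        = Real.log y - Real.log (y + c) := fun y hy => (aux_hasDerivAt c hc hy).deriv
  refine MonotoneOn.convexOn_of_deriv (convex_Ici 0) ?_ ?_ ?_
  · -- continuity on Ici 0
    have : Continuous fun y : ℝ => y * Real.log y - (y + c) * Real.log (y + c) :=
      Real.continuous_mul_log.sub (Real.continuous_mul_log.comp (continuous_id.add continuous_const))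
    exact this.continuousOn
  · rw [interior_Ici]
    intro y hy
    exact ((aux_hasDerivAt c hc hy).differentiableAt).differentiableWithinAt
  · rw [interior_Ici]
    intro a ha b hb hab
    rw [hderiv a ha, hderiv b hb]
    have ha' : (0:ℝ) < a := ha
    have hb' : (0:ℝ) < b := hb
    have hac : (0:ℝ) < a + c := by linarith
    have hbc : (0:ℝ) < b + c := by linarith
    have key : a * (b + c) ≤ b * (a + c) := by nlinarith
    have : Real.log (a * (b + c)) ≤ Real.log (b * (a + c)) :=
      Real.log_le_log (by positivity) key
    rw [Real.log_mul ha'.ne' hbc.ne', Real.log_mul hb'.ne' hac.ne'] at this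
    linarith

/-- Convexity of the RCGAN objective at the optimal discriminator as a function of
the generator distribution `p`:
`F(p) = Σ (t i + p i)·log (t i + p i) − Σ (t i + p i + q i)·log (t i + p i + q i)`
(with the convention `0·log 0 = 0`, which `Real.log 0 = 0` realizes) is convex on
the set of componentwise-nonnegative `p`. -/
theorem F_convex {I : Type*} [Fintype I] [Nonempty I]
    (q t : I → ℝ) (hq : ∀ i, 0 ≤ q i) (ht : ∀ i, 0 ≤ t i)
    (F : (I → ℝ) → ℝ)
    (hF : ∀ p : I → ℝ, F p =
      (∑ i, (t i + p i) * Real.log (t i + p i)) -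
        ∑ i, (t i + p i + q i) * Real.log (t i + p i + q i)) :
    ∀ p p' : I → ℝ, (∀ i, 0 ≤ p i) → (∀ i, 0 ≤ p' i) →
      ∀ lam : ℝ, 0 ≤ lam → lam ≤ 1 →
        F (fun i => lam * p i + (1 - lam) * p' i) ≤ lam * F p + (1 - lam) * F p' := by
  intro p p' hp hp' lam hl0 hl1
  set g : I → ℝ → ℝ := fun i y => y * Real.log y - (y + q i) * Real.log (y + q i) with hg
  have key : ∀ i : I, g i (t i + (lam * p i + (1 - lam) * p' i))
      ≤ lam * g i (t i + p i) + (1 - lam) * g i (t i + p' i) := by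
    intro i
    have hcon := aux_convexOn (q i) (hq i)
    have hx : t i + p i ∈ Set.Ici (0:ℝ) := by
      have := ht i; have := hp i; simp only [Set.mem_Ici]; linarith
    have hy : t i + p' i ∈ Set.Ici (0:ℝ) := by
      have := ht i; have := hp' i; simp only [Set.mem_Ici]; linarith
    have := hcon.2 hx hy hl0 (show (0:ℝ) ≤ 1 - lam by linarith) (show lam + (1 - lam) = 1 by ring)
    have heq : lam • (t i + p i) + (1 - lam) • (t i + p' i)
        = t i + (lam * p i + (1 - lam) * p' i) := by simp [smul_eq_mul]; ring
    rw [heq] at this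
    simp only [smul_eq_mul] at this
    exact this
  have hsum : ∑ i, g i (t i + (lam * p i + (1 - lam) * p' i))
      ≤ ∑ i, (lam * g i (t i + p i) + (1 - lam) * g i (t i + p' i)) :=
    Finset.sum_le_sum fun i _ => key i
  rw [hF, hF, hF]
  have expand : ∀ r : I → ℝ,
      ((∑ i, (t i + r i) * Real.log (t i + r i)) -
        ∑ i, (t i + r i + q i) * Real.log (t i + r i + q i))
      = ∑ i, g i (t i + r i) := by
    intro r
    rw [← Finset.sum_sub_distrib]
  rw [expand, expand, expand, Finset.mul_sum, Finset.mul_sum, ← Finset.sum_add_distrib]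
  exact hsum
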